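/- For 0 < a < 1, all six extraneous fixed points of C_a are real and lie in the open interval (-1, 1); the three positive ones a₁ > a₂ > a₃ satisfy 0 < a₃ < √a < a₂ < √((a+1)/2) < a₁ < 1. -/
import Mathlib

/-- For `0 < a < 1`, all six extraneous fixed points of `C_a` (solutions of `Q(z)=0`) are
real and lie in `(-1,1)`; the positive ones `a₁ > a₂ > a₃` satisfy
`0 < a₃ < √a < a₂ < √((a+1)/2) < a₁ < 1`. -/
theorem stmt11 (a : ℝ) (ha0 : 0 < a) (ha1 : a < 1) :
    ∃ a1 a2 a3 : ℝ,
      0 < a3 ∧ a3 < Real.sqrt a ∧ Real.sqrt a < a2 ∧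
      a2 < Real.sqrt ((a + 1) / 2) ∧ Real.sqrt ((a + 1) / 2) < a1 ∧ a1 < 1 ∧
      ∀ z : ℂ,
        (22 * z ^ 6 - 23 * ((a : ℂ) + 1) * z ^ 4
            + (5 * (a : ℂ) ^ 2 + 16 * (a : ℂ) + 5) * z ^ 2 - (a : ℂ) * ((a : ℂ) + 1) = 0
          ↔ (z = (a1 : ℂ) ∨ z = -(a1 : ℂ) ∨ z = (a2 : ℂ) ∨ z = -(a2 : ℂ)
              ∨ z = (a3 : ℂ) ∨ z = -(a3 : ℂ))) := by
  set q : ℝ → ℝ := fun w => 22*w^3 - 23*(a+1)*w^2 + (5*a^2+16*a+5)*w - a*(a+1) with hq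
  have hcont : Continuous q := by fun_prop
  have h1a : (0:ℝ) < 1 - a := by linarith
  have hsq : 0 < (1 - a) * (1 - a) := mul_pos h1a h1a
  have hq0 : q 0 < 0 := by simp only [hq]; nlinarith
  have hqa : 0 < q a := by simp only [hq]; nlinarith [mul_pos ha0 hsq]
  have hqm : q ((a+1)/2) < 0 := by simp only [hq]; nlinarith [mul_pos (mul_pos ha0 hsq) h1a, hsq]
  have hq1 : 0 < q 1 := by simp only [hq]; nlinarith
  have ham : a < (a+1)/2 := by linarith
  have hm1 : (a+1)/2 < 1 := by linarith
  obtain ⟨b3, hb3m, hb3⟩ := intermediate_value_Ioo (le_of_lt ha0) hcont.continuousOn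
    (Set.mem_Ioo.mpr ⟨hq0, hqa⟩)
  obtain ⟨b2, hb2m, hb2⟩ := intermediate_value_Ioo' (le_of_lt ham) hcont.continuousOn
    (Set.mem_Ioo.mpr ⟨hqm, hqa⟩)
  obtain ⟨b1, hb1m, hb1⟩ := intermediate_value_Ioo (le_of_lt hm1) hcont.continuousOn
    (Set.mem_Ioo.mpr ⟨hqm, hq1⟩)
  obtain ⟨hb30, hb3a⟩ := hb3m
  obtain ⟨hb2a, hb2m'⟩ := hb2m
  obtain ⟨hb1m', hb11⟩ := hb1m
  have hb20 : (0:ℝ) < b2 := lt_trans ha0 hb2a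
  have hb10 : (0:ℝ) < b1 := by linarith
  -- root equations
  have e1 : 22*b1^3 - 23*(a+1)*b1^2 + (5*a^2+16*a+5)*b1 - a*(a+1) = 0 := hb1
  have e2 : 22*b2^3 - 23*(a+1)*b2^2 + (5*a^2+16*a+5)*b2 - a*(a+1) = 0 := hb2
  have e3 : 22*b3^3 - 23*(a+1)*b3^2 + (5*a^2+16*a+5)*b3 - a*(a+1) = 0 := hb3
  have hne12 : b1 - b2 ≠ 0 := by intro h; nlinarith
  have hne13 : b1 - b3 ≠ 0 := by intro h; nlinarith
  have hne23 : b2 - b3 ≠ 0 := by intro h; nlinarith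
  have h12 : 22*(b1^2+b1*b2+b2^2) - 23*(a+1)*(b1+b2) + (5*a^2+16*a+5) = 0 := by
    have h : (b1-b2) * (22*(b1^2+b1*b2+b2^2) - 23*(a+1)*(b1+b2) + (5*a^2+16*a+5)) = 0 := by
      linear_combination e1 - e2
    exact (mul_eq_zero.mp h).resolve_left hne12
  have h13 : 22*(b1^2+b1*b3+b3^2) - 23*(a+1)*(b1+b3) + (5*a^2+16*a+5) = 0 := by
    have h : (b1-b3) * (22*(b1^2+b1*b3+b3^2) - 23*(a+1)*(b1+b3) + (5*a^2+16*a+5)) = 0 := by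
      linear_combination e1 - e3
    exact (mul_eq_zero.mp h).resolve_left hne13
  have he1 : 22*(b1+b2+b3) = 23*(a+1) := by
    have h : (b2-b3) * (22*(b1+b2+b3) - 23*(a+1)) = 0 := by linear_combination h12 - h13
    have := (mul_eq_zero.mp h).resolve_left hne23
    linarith
  have he2 : 22*(b1*b2+b1*b3+b2*b3) = 5*a^2+16*a+5 := by
    linear_combination (b1+b2)*he1 - h12
  have he3 : 22*(b1*b2*b3) = a*(a+1) := by
    linear_combination e1 - b1^2*he1 + b1*he2
  -- complex factorization
  have He1 : (22:ℂ)*((b1:ℂ)+b2+b3) = 23*((a:ℂ)+1) := by exact_mod_cast he1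
  have He2 : (22:ℂ)*((b1:ℂ)*b2+(b1:ℂ)*b3+(b2:ℂ)*b3) = 5*(a:ℂ)^2+16*(a:ℂ)+5 := by
    exact_mod_cast he2
  have He3 : (22:ℂ)*((b1:ℂ)*b2*b3) = (a:ℂ)*((a:ℂ)+1) := by exact_mod_cast he3
  have key : ∀ z : ℂ, 22 * z ^ 6 - 23 * ((a : ℂ) + 1) * z ^ 4
      + (5 * (a : ℂ) ^ 2 + 16 * (a : ℂ) + 5) * z ^ 2 - (a : ℂ) * ((a : ℂ) + 1)
      = 22 * (z^2 - b1) * (z^2 - b2) * (z^2 - b3) := fun z => by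
    linear_combination z^4*He1 - z^2*He2 + He3
  have sq_iff : ∀ z w : ℂ, z^2 = w^2 ↔ z = w ∨ z = -w := fun z w => by
    constructor
    · intro h
      have h' : (z - w) * (z + w) = 0 := by linear_combination h
      rcases mul_eq_zero.mp h' with h'' | h''
      · exact Or.inl (sub_eq_zero.mp h'')
      · exact Or.inr (eq_neg_of_add_eq_zero_left h'')
    · rintro (rfl | rfl) <;> ring
  refine ⟨Real.sqrt b1, Real.sqrt b2, Real.sqrt b3, Real.sqrt_pos.mpr hb30, ?_, ?_, ?_, ?_, ?_, ?_⟩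
  · exact Real.sqrt_lt_sqrt (le_of_lt hb30) hb3a
  · exact Real.sqrt_lt_sqrt ha0.le hb2a
  · exact Real.sqrt_lt_sqrt (le_of_lt hb20) hb2m'
  · exact Real.sqrt_lt_sqrt (by positivity) hb1m'
  · calc Real.sqrt b1 < Real.sqrt 1 := Real.sqrt_lt_sqrt (le_of_lt hb10) hb11
      _ = 1 := Real.sqrt_one
  · intro z
    rw [key z]
    have s1 : ((Real.sqrt b1 : ℝ) : ℂ)^2 = (b1 : ℂ) := by
      rw [← Complex.ofReal_pow, Real.sq_sqrt (le_of_lt hb10)]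
    have s2 : ((Real.sqrt b2 : ℝ) : ℂ)^2 = (b2 : ℂ) := by
      rw [← Complex.ofReal_pow, Real.sq_sqrt (le_of_lt hb20)]
    have s3 : ((Real.sqrt b3 : ℝ) : ℂ)^2 = (b3 : ℂ) := by
      rw [← Complex.ofReal_pow, Real.sq_sqrt (le_of_lt hb30)]
    constructor
    · intro h
      rcases mul_eq_zero.mp h with h' | h'
      · rcases mul_eq_zero.mp h' with h'' | h''
        · rcases mul_eq_zero.mp h'' with h3 | h3
          · exact absurd h3 (by norm_num)
          · have : z^2 = ((Real.sqrt b1 : ℝ) : ℂ)^2 := by rw [s1]; linear_combination h3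
            rcases (sq_iff _ _).mp this with h4 | h4
            · exact Or.inl h4
            · exact Or.inr (Or.inl h4)
        · have : z^2 = ((Real.sqrt b2 : ℝ) : ℂ)^2 := by rw [s2]; linear_combination h''
          rcases (sq_iff _ _).mp this with h4 | h4
          · exact Or.inr (Or.inr (Or.inl h4))
          · exact Or.inr (Or.inr (Or.inr (Or.inl h4)))
      · have : z^2 = ((Real.sqrt b3 : ℝ) : ℂ)^2 := by rw [s3]; linear_combination h'
        rcases (sq_iff _ _).mp this with h4 | h4
        · exact Or.inr (Or.inr (Or.inr (Or.inr (Or.inl h4))))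
        · exact Or.inr (Or.inr (Or.inr (Or.inr (Or.inr h4))))
    · rintro (rfl | rfl | rfl | rfl | rfl | rfl) <;>
        first
          | linear_combination (22*(((Real.sqrt b1 : ℝ):ℂ)^2-(b2:ℂ))*(((Real.sqrt b1 : ℝ):ℂ)^2-(b3:ℂ)))*s1
          | linear_combination (22*(((Real.sqrt b2 : ℝ):ℂ)^2-(b1:ℂ))*(((Real.sqrt b2 : ℝ):ℂ)^2-(b3:ℂ)))*s2
          | linear_combination (22*(((Real.sqrt b3 : ℝ):ℂ)^2-(b1:ℂ))*(((Real.sqrt b3 : ℝ):ℂ)^2-(b2:ℂ)))*s3
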